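/- Let A be an m×n real matrix, b ∈ ℝᵐ, and 1 ≤ h < m. Suppose there exist real scalars ξ_{ij} for h+1 ≤ i ≤ m and 1 ≤ j ≤ h such that A_{ic} = max_{1≤j≤h} ( A_{jc} + ξ_{ij} ) for all columns c ∈ {1,…,n} and all i ∈ {h+1,…,m}, and suppose the compatibility equalities b_i = max_{1≤j≤h} ( b_j + ξ_{ij} ) hold for every i ∈ {h+1,…,m}. Let B be the h×n matrix consisting of the first h rows of A and b' ∈ ℝʰ the vector of the first h entries of b. Then the system A ⊙ X = b has a solution X ∈ ℝⁿ if and only if the reduced system B ⊙ X = b' has a solution X ∈ ℝⁿ. -/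

import Mathlib

open Matrix

/-- row analysis, reduction: Let `A` be an `m × (n+1)` real matrix,
`b ∈ ℝ^m`, `1 ≤ h < m`. Suppose there are scalars `ξ i j` such that every row of `A`
beyond the `h`-th is a tropical linear combination of the first `h` rows:
`A i c = max_{j < h} (A j c + ξ i j)` for all `c` and all `i` with `h ≤ i`, and suppose
the compatibility equalities `b i = max_{j < h} (b j + ξ i j)` hold for all `i` with
`h ≤ i`. Let `B` be the `h × (n+1)` matrix of the first `h` rows of `A` and `b'` the
vector of the first `h` entries of `b`. Then `A ⊙ X = b` has a solution iff the reduced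
system `B ⊙ X = b'` has a solution. -/
theorem stmt12 {m n h : ℕ} (hh : 1 ≤ h) (hhm : h < m)
    (A : Matrix (Fin m) (Fin (n+1)) ℝ) (b : Fin m → ℝ)
    (ξ : Fin m → Fin h → ℝ)
    (hξ : ∀ i : Fin m, h ≤ (i : ℕ) → ∀ c : Fin (n+1),
      A i c = Finset.univ.sup' ⟨⟨0, hh⟩, Finset.mem_univ _⟩
        (fun j : Fin h => A (Fin.castLE hhm.le j) c + ξ i j))
    (hb : ∀ i : Fin m, h ≤ (i : ℕ) →
      b i = Finset.univ.sup' ⟨⟨0, hh⟩, Finset.mem_univ _⟩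
        (fun j : Fin h => b (Fin.castLE hhm.le j) + ξ i j)) :
    (∃ X : Fin (n+1) → ℝ, ∀ i : Fin m,
        Finset.univ.sup' ⟨0, Finset.mem_univ 0⟩
          (fun j : Fin (n+1) => A i j + X j) = b i) ↔
    (∃ X : Fin (n+1) → ℝ, ∀ i : Fin h,
        Finset.univ.sup' ⟨0, Finset.mem_univ 0⟩
          (fun j : Fin (n+1) => A (Fin.castLE hhm.le i) j + X j) = b (Fin.castLE hhm.le i)) := by
  
  constructor
  · rintro ⟨X, hX⟩
    exact ⟨X, fun i => hX _⟩
  · rintro ⟨X, hX⟩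
    refine ⟨X, fun i => ?_⟩
    by_cases hi : h ≤ (i : ℕ)
    · rw [hb i hi]
      have : ∀ j : Fin (n+1), A i j + X j
          = Finset.univ.sup' ⟨⟨0, hh⟩, Finset.mem_univ _⟩
            (fun k : Fin h => (A (Fin.castLE hhm.le k) j + X j) + ξ i k) := by
        intro j
        rw [hξ i hi j]; erw [Finset.sup'_add]
        refine Finset.sup'_congr _ rfl (fun k _ => by ring)
      calc Finset.univ.sup' ⟨0, Finset.mem_univ 0⟩ (fun j : Fin (n+1) => A i j + X j)
          = Finset.univ.sup' ⟨0, Finset.mem_univ 0⟩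
            (fun j : Fin (n+1) => Finset.univ.sup' ⟨⟨0, hh⟩, Finset.mem_univ _⟩
              (fun k : Fin h => (A (Fin.castLE hhm.le k) j + X j) + ξ i k)) := by
            exact Finset.sup'_congr _ rfl (fun j _ => this j)
        _ = Finset.univ.sup' ⟨⟨0, hh⟩, Finset.mem_univ _⟩
            (fun k : Fin h => Finset.univ.sup' ⟨0, Finset.mem_univ 0⟩
              (fun j : Fin (n+1) => (A (Fin.castLE hhm.le k) j + X j) + ξ i k)) :=
            Finset.sup'_comm _ _ _
        _ = Finset.univ.sup' ⟨⟨0, hh⟩, Finset.mem_univ _⟩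
            (fun k : Fin h => b (Fin.castLE hhm.le k) + ξ i k) := by
            refine Finset.sup'_congr _ rfl (fun k _ => ?_)
            rw [← hX k]; erw [Finset.sup'_add]
    · push_neg at hi
      have := hX ⟨(i : ℕ), hi⟩
      simpa using this
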